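/- Let F be a real Hilbert space, U ⊆ F a nonempty open convex set, and Φ : F → ℝ Fréchet differentiable and strictly convex on U. Let X be an F-valued Bochner-integrable random element with X ∈ U almost surely, E‖X‖ < ∞, E|Φ(X)| < ∞, and Bochner mean f̄ = E[X] ∈ U, and suppose E[d_Φ(X,g)] is finite for all g ∈ U. Then f̄ is the unique minimiser over U of the map g ↦ E[d_Φ(X,g)]. -/

import Mathlib

open scoped RealInnerProductSpace
open MeasureTheory

/-- The functional Bregman divergence `d_Φ(f,g) = Φ(f) − Φ(g) − ⟪∇Φ(g), f − g⟫`. -/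
noncomputable def bregmanDiv {F : Type*} [NormedAddCommGroup F] [InnerProductSpace ℝ F]
    (Φ : F → ℝ) (Φ' : F → F) (f g : F) : ℝ :=
  Φ f - Φ g - ⟪Φ' g, f - g⟫

/-- Mean-as-minimiser: let `Φ` be Fréchet differentiable (with Riesz gradient `Φ'`) and
strictly convex on a nonempty open convex set `U` of a real Hilbert space, and let `X` be a
Bochner-integrable random element with `X ∈ U` a.s., `Φ(X)` integrable, Bochner mean
`f̄ = E[X] ∈ U`, and `E[d_Φ(X,g)]` finite for all `g ∈ U`. Then `f̄` is the unique
minimiser over `U` of `g ↦ E[d_Φ(X,g)]`. -/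

lemma grad_le {F : Type*} [NormedAddCommGroup F] [InnerProductSpace ℝ F] [CompleteSpace F]
    {U : Set F} {Φ : F → ℝ} (hconv : ConvexOn ℝ U Φ)
    {g x : F} (hg : HasGradientAt Φ g x) (hx : x ∈ U) {y : F} (hy : y ∈ U) :
    Φ x + ⟪g, y - x⟫ ≤ Φ y := by
  rcases eq_or_ne y x with rfl | hne
  · simp
  · set v := y - x with hv
    have hline : HasDerivAt (fun t : ℝ => x + t • v) v 0 := by
      simpa using ((hasDerivAt_id (0:ℝ)).smul_const v).const_add x
    have hφ : HasDerivAt (fun t : ℝ => Φ (x + t • v)) ⟪g, v⟫ 0 := by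
      have hg' : HasFDerivAt Φ ((InnerProductSpace.toDual ℝ F) g) (x + (0:ℝ) • v) := by
        simpa using hasGradientAt_iff_hasFDerivAt.mp hg
      have h2 := hg'.comp_hasDerivAt (0:ℝ) hline
      exact h2
    have hpre : ConvexOn ℝ ((⇑(AffineMap.lineMap x y) : ℝ → F) ⁻¹' U)
        (fun t => Φ (x + t • v)) := by
      have h3 := hconv.comp_affineMap (AffineMap.lineMap x y)
      convert h3 using 2 with t
      · rfl
      · rfl
      · rfl
      · rfl
      simp [AffineMap.lineMap_apply, hv, add_comm]
    have h0 : (0:ℝ) ∈ (⇑(AffineMap.lineMap x y) : ℝ → F) ⁻¹' U := by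
      simp [AffineMap.lineMap_apply, hx]
    have h1 : (1:ℝ) ∈ (⇑(AffineMap.lineMap x y) : ℝ → F) ⁻¹' U := by
      simp [AffineMap.lineMap_apply, hy]
    have := hpre.le_slope_of_hasDerivAt h0 h1 one_pos hφ
    rw [slope_def_field] at this
    simp only [zero_smul, add_zero, one_smul, hv] at this
    have h4 : Φ (x + (y - x)) = Φ y := by congr 1; abel
    rw [h4] at this
    have h5 : (Φ y - Φ x) / (1 - 0) = Φ y - Φ x := by norm_num
    rw [h5] at this
    linarith

lemma grad_lt {F : Type*} [NormedAddCommGroup F] [InnerProductSpace ℝ F] [CompleteSpace F]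
    {U : Set F} (hUconv : Convex ℝ U) {Φ : F → ℝ} (hconv : StrictConvexOn ℝ U Φ)
    {g x : F} (hg : HasGradientAt Φ g x) (hx : x ∈ U) {y : F} (hy : y ∈ U) (hne : y ≠ x) :
    Φ x + ⟪g, y - x⟫ < Φ y := by
  set m := midpoint ℝ x y with hm
  have hmU : m ∈ U := hUconv.segment_subset hx hy (midpoint_mem_segment x y)
  have hmeq : m = (1/2 : ℝ) • x + (1/2 : ℝ) • y := by
    rw [hm, midpoint_eq_smul_add, invOf_eq_inv]; module
  have hmid : Φ m < (1/2 : ℝ) * Φ x + (1/2 : ℝ) * Φ y := by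
    have := hconv.2 hx hy (Ne.symm hne) (by norm_num : (0:ℝ) < 1/2)
      (by norm_num : (0:ℝ) < 1/2) (by norm_num)
    simpa [hmeq, smul_eq_mul] using this
  have hle : Φ x + ⟪g, m - x⟫ ≤ Φ m := grad_le hconv.convexOn hg hx hmU
  have hmx : m - x = (1/2 : ℝ) • (y - x) := by
    rw [hmeq]; module
  rw [hmx, real_inner_smul_right] at hle
  linarith

theorem bregman_mean_as_minimiser
    {F : Type*} [NormedAddCommGroup F] [InnerProductSpace ℝ F] [CompleteSpace F]
    {Ω : Type*} [MeasurableSpace Ω] (P : Measure Ω) [IsProbabilityMeasure P]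
    (U : Set F) (hU : IsOpen U) (hUconv : Convex ℝ U) (hUne : U.Nonempty)
    (Φ : F → ℝ) (Φ' : F → F)
    (hdiff : ∀ x ∈ U, HasGradientAt Φ (Φ' x) x)
    (hconv : StrictConvexOn ℝ U Φ)
    (X : Ω → F)
    (hXint : Integrable X P)
    (hXU : ∀ᵐ ω ∂P, X ω ∈ U)
    (hΦX : Integrable (fun ω => Φ (X ω)) P)
    (fbar : F) (hfbar : fbar = ∫ ω, X ω ∂P) (hfbarU : fbar ∈ U)
    (hint : ∀ g ∈ U, Integrable (fun ω => bregmanDiv Φ Φ' (X ω) g) P) :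
    (∀ g ∈ U, ∫ ω, bregmanDiv Φ Φ' (X ω) fbar ∂P ≤ ∫ ω, bregmanDiv Φ Φ' (X ω) g ∂P) ∧
      ∀ g ∈ U, g ≠ fbar →
        ∫ ω, bregmanDiv Φ Φ' (X ω) fbar ∂P < ∫ ω, bregmanDiv Φ Φ' (X ω) g ∂P := by

  have key : ∀ g : F, ∫ ω, bregmanDiv Φ Φ' (X ω) g ∂P
      = (∫ ω, Φ (X ω) ∂P) - Φ g - ⟪Φ' g, fbar - g⟫ := by
    intro g
    have hsub : Integrable (fun ω => X ω - g) P := hXint.sub (integrable_const g)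
    have hinner : Integrable (fun ω => ⟪Φ' g, X ω - g⟫) P :=
      (innerSL ℝ (Φ' g)).integrable_comp hsub
    have hXmean : ∫ ω, (X ω - g) ∂P = fbar - g := by
      rw [integral_sub hXint (integrable_const g), integral_const]
      simp [hfbar]
    have heq : ∫ ω, bregmanDiv Φ Φ' (X ω) g ∂P
        = ∫ ω, (Φ (X ω) - Φ g - ⟪Φ' g, X ω - g⟫) ∂P := rfl
    rw [heq]
    have hint1 : Integrable (fun ω => Φ (X ω) - Φ g) P := hΦX.sub (integrable_const _)
    rw [integral_sub hint1 hinner, integral_sub hΦX (integrable_const (Φ g)), integral_const]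
    have hi : ∫ ω, ⟪Φ' g, X ω - g⟫ ∂P = ⟪Φ' g, fbar - g⟫ := by
      rw [← hXmean]
      exact (ContinuousLinearMap.integral_comp_comm (innerSL ℝ (Φ' g)) hsub).symm ▸ rfl
    rw [hi]; simp
  have hbar : ∫ ω, bregmanDiv Φ Φ' (X ω) fbar ∂P = (∫ ω, Φ (X ω) ∂P) - Φ fbar := by
    rw [key fbar]; simp
  constructor
  · intro g hg
    have hle := grad_le hconv.convexOn (hdiff g hg) hg hfbarU
    rw [key g, hbar]; linarith
  · intro g hg hne
    have hlt := grad_lt hUconv hconv (hdiff g hg) hg hfbarU (Ne.symm hne)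
    rw [key g, hbar]; linarith
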